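/- Let n > 4, let A be a diminishable pair-set in Q_n, let i ∈ [n], and assume that if |A| = n then i is separating for A. Then there are at most two distinct vertices γ of Q_n satisfying ρ_{i=γ(i)}(γ) ∈ enc(ρ_{i=γ(i)}(∪A)); moreover, if γ and γ' are two distinct such vertices, then |A| ≥ n-1 and χ(γ) ≠ χ(γ'). -/

import Mathlib

open SimpleGraph Finset

attribute [local instance 10] Classical.propDecidable

/-- Vertices of the `n`-dimensional hypercube: 0-1 vectors of length `n`. -/
abbrev Vtx (n : ℕ) : Type := Fin n → Bool

/-- The hypercube graph `Q_n`: two vectors are adjacent iff they differ in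
exactly one coordinate, i.e. their Hamming distance is `1`. -/
def cube (n : ℕ) : SimpleGraph (Vtx n) where
  Adj α β := hammingDist α β = 1
  symm := by
    constructor
    intro α β h
    change hammingDist α β = 1 at h
    change hammingDist β α = 1
    rwa [hammingDist_comm]
  loopless := by
    constructor
    intro α h
    simp [hammingDist_self] at h

/-- The parity `χ(α) = (-1)^(sum of coordinates of α)`. -/
def chi {n : ℕ} (α : Vtx n) : ℤ := ∏ i, if α i then (-1 : ℤ) else 1

/-- `χ(α) + χ(β)` for an unordered pair `{α, β}`. -/
def pairChi {n : ℕ} : Sym2 (Vtx n) → ℤ :=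
  Sym2.lift ⟨fun α β => chi α + chi β, fun _ _ => add_comm _ _⟩

/-- `∪A` : the set of all vertices occurring in pairs of `A`. -/
def suppA {n : ℕ} (A : Finset (Sym2 (Vtx n))) : Set (Vtx n) :=
  {v | ∃ p ∈ A, v ∈ p}

/-- A pair-set: distinct pairs are disjoint (as vertex sets), and a nonempty
pair-set contains a non-degenerated pair. -/
def IsPairSet {n : ℕ} (A : Finset (Sym2 (Vtx n))) : Prop :=
  (∀ p ∈ A, ∀ q ∈ A, p ≠ q → ∀ v : Vtx n, v ∈ p → v ∉ q) ∧
  (A.Nonempty → ∃ p ∈ A, ¬ p.IsDiag)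

/-- An odd pair: its two vertices have different parities. -/
def OddPair {n : ℕ} (p : Sym2 (Vtx n)) : Prop :=
  ∃ α β : Vtx n, p = s(α, β) ∧ chi α ≠ chi β

/-- An odd pair-set: every pair is odd. -/
def OddPairSet {n : ℕ} (A : Finset (Sym2 (Vtx n))) : Prop :=
  ∀ p ∈ A, OddPair p

/-- A balanced pair-set: the parities sum up to `0`. -/
def BalancedPS {n : ℕ} (A : Finset (Sym2 (Vtx n))) : Prop :=
  ∑ p ∈ A, pairChi p = 0

/-- An edge-pair: its two vertices differ in exactly one coordinate. -/
def IsEdgePair {n : ℕ} (p : Sym2 (Vtx n)) : Prop :=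
  ∃ α β : Vtx n, p = s(α, β) ∧ hammingDist α β = 1

/-- `enco X` : vertices all of whose neighbours lie in `X`. -/
def enco {n : ℕ} (X : Set (Vtx n)) : Set (Vtx n) :=
  {γ | ∀ δ : Vtx n, (cube n).Adj γ δ → δ ∈ X}

/-- `enc X = enco X \ X` for a vertex set `X`. -/
def encSet {n : ℕ} (X : Set (Vtx n)) : Set (Vtx n) := enco X \ X

/-- `enc A = enco (∪A) \ ∪A` for a pair-set `A`. -/
def encA {n : ℕ} (A : Finset (Sym2 (Vtx n))) : Set (Vtx n) :=
  enco (suppA A) \ suppA A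

/-- A pair-set `A` is connectable if there is a family of paths in `Q_n`, one
path joining the two vertices of each pair of `A`, such that every vertex of
`Q_n` lies on exactly one of these paths. -/
def Connectable {n : ℕ} (A : Finset (Sym2 (Vtx n))) : Prop :=
  ∃ (src tgt : Sym2 (Vtx n) → Vtx n)
    (path : (p : Sym2 (Vtx n)) → (cube n).Walk (src p) (tgt p)),
    (∀ p ∈ A, p = s(src p, tgt p)) ∧
    (∀ p ∈ A, (path p).IsPath) ∧
    (∀ v : Vtx n, ∃! p : Sym2 (Vtx n), p ∈ A ∧ v ∈ (path p).support)

/-- `A` contains at least two edge-pairs. -/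
def TwoEdgePairs {n : ℕ} (A : Finset (Sym2 (Vtx n))) : Prop :=
  ∃ p ∈ A, ∃ q ∈ A, p ≠ q ∧ IsEdgePair p ∧ IsEdgePair q

/-- A diminishable pair-set. -/
def Diminishable {n : ℕ} (A : Finset (Sym2 (Vtx n))) : Prop :=
  IsPairSet A ∧ OddPairSet A ∧
  ((A.card ≤ n - 1 ∧
      (n = 4 →
        (∃ p ∈ A, IsEdgePair p) ∨
          ¬∃ X : Set (Vtx n), suppA A ⊆ X ∧
            Nonempty ((cube n).induce X ≃g cube 3))) ∨
    (A.card = n ∧ n ≠ 4 ∧ TwoEdgePairs A ∧ encA A = ∅))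

/-- The coordinate `i` is separating for `A`. -/
def Separating {n : ℕ} (i : Fin n) (A : Finset (Sym2 (Vtx n))) : Prop :=
  ∃ α β α' β' : Vtx n, s(α, β) ∈ A ∧ s(α', β') ∈ A ∧
    hammingDist α β = 1 ∧ hammingDist α' β' = 1 ∧
    α i = β i ∧ α' i = β' i ∧ α i ≠ α' i

/-- The relation `A ⇒ B`. -/
def StepRel {n : ℕ} (A B : Finset (Sym2 (Vtx n))) : Prop :=
  ∃ (α β α' β' : Vtx n) (i : Fin n),
    s(α, β) ∈ A ∧ s(α', β') ∈ A ∧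
    β' = Function.update β i (!(β i)) ∧
    B = A \ {s(α, β), s(α', β')} ∪ {s(α, α')}

/-- Isomorphism of pair-sets, induced by an automorphism of the hypercube. -/
def Isomorphic {n : ℕ} (A B : Finset (Sym2 (Vtx n))) : Prop :=
  ∃ f : cube n ≃g cube n, B = A.image (Sym2.map f)

/-- `ρ_{i=k}` applied to a pair-set: keep the pairs with both `i`-th
coordinates equal to `k` and delete the `i`-th coordinate. -/
def rhoPairs {m : ℕ} (i : Fin (m + 1)) (k : Bool) (B : Finset (Sym2 (Vtx (m + 1)))) :
    Finset (Sym2 (Vtx m)) :=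
  (B.filter fun p => ∀ v ∈ p, v i = k).image (Sym2.map (Fin.removeNth i))

/-- `ρ_{i=k}` applied to a vertex set. -/
def rhoSet {m : ℕ} (i : Fin (m + 1)) (k : Bool) (X : Set (Vtx (m + 1))) : Set (Vtx m) :=
  {γ | ∃ α ∈ X, α i = k ∧ γ = Fin.removeNth i α}

/-- `ι_{i,k}(A, B)`. -/
def iotaPairs {m : ℕ} (i : Fin (m + 1)) (k : Bool) (A B : Finset (Sym2 (Vtx m))) :
    Finset (Sym2 (Vtx (m + 1))) :=
  A.image (Sym2.map (i.insertNth k)) ∪ B.image (Sym2.map (i.insertNth (!k)))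

section Aux

variable {n : ℕ}

lemma chi_eq_one_or (α : Vtx n) : chi α = 1 ∨ chi α = -1 := by
  unfold chi
  induction (Finset.univ : Finset (Fin n)) using Finset.induction with
  | empty => left; simp
  | @insert a s ha ih =>
    rw [Finset.prod_insert ha]
    rcases ih with h | h <;> rw [h] <;> by_cases hb : α a <;> simp [hb]

lemma chi_update (γ : Vtx n) (j : Fin n) :
    chi (Function.update γ j (!γ j)) = - chi γ := by
  classical
  unfold chi
  rw [← Finset.mul_prod_erase _ _ (Finset.mem_univ j),
      ← Finset.mul_prod_erase _ (fun k => if γ k then (-1 : ℤ) else 1) (Finset.mem_univ j)]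
  have hprod : (∏ k ∈ Finset.univ.erase j,
      (if Function.update γ j (!γ j) k then (-1 : ℤ) else 1))
      = ∏ k ∈ Finset.univ.erase j, (if γ k then (-1 : ℤ) else 1) := by
    refine Finset.prod_congr rfl fun k hk => ?_
    rw [Function.update_of_ne (Finset.mem_erase.mp hk).1]
  rw [hprod, Function.update_self]
  cases hgj : γ j <;> simp

lemma hamming_update (x : Vtx n) (l : Fin n) :
    hammingDist (Function.update x l (!x l)) x = 1 := by
  classical
  show (Finset.univ.filter fun k => Function.update x l (!x l) k ≠ x k).card = 1
  have : (Finset.univ.filter fun k => Function.update x l (!x l) k ≠ x k) = {l} := by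
    ext k
    simp only [Finset.mem_filter, Finset.mem_univ, true_and, Finset.mem_singleton]
    constructor
    · intro hk
      by_contra hne
      rw [Function.update_of_ne hne] at hk
      exact hk rfl
    · rintro rfl
      rw [Function.update_self]
      exact Bool.not_ne_self _
  rw [this, Finset.card_singleton]

/-- If two distinct one-coordinate flips coincide, the flip coordinates differ. -/
lemma flip_coords_ne {γ γ' : Vtx n} (hne : γ ≠ γ') {j j' : Fin n}
    (heq : Function.update γ j (!γ j) = Function.update γ' j' (!γ' j')) : j ≠ j' := by
  intro hjj'
  rw [← hjj'] at heq
  apply hne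
  funext w
  by_cases hl : w = j
  · subst hl
    have h := congrFun heq w
    rw [Function.update_self, Function.update_self] at h
    exact Bool.not_inj h
  · have h := congrFun heq w
    rwa [Function.update_of_ne hl, Function.update_of_ne hl] at h

lemma flip_coord_diff {γ γ' : Vtx n} (hne : γ ≠ γ') {j j' : Fin n}
    (heq : Function.update γ j (!γ j) = Function.update γ' j' (!γ' j')) :
    γ j ≠ γ' j := by
  have hjj' := flip_coords_ne hne heq
  have h := congrFun heq j
  rw [Function.update_self, Function.update_of_ne hjj'] at h
  rw [← h]
  exact (Bool.not_ne_self _).symm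

lemma flip_agree {γ γ' : Vtx n} {j j' : Fin n}
    (heq : Function.update γ j (!γ j) = Function.update γ' j' (!γ' j'))
    {l : Fin n} (hlj : l ≠ j) (hlj' : l ≠ j') : γ l = γ' l := by
  have h := congrFun heq l
  rwa [Function.update_of_ne hlj, Function.update_of_ne hlj'] at h

end Aux

section MainAux

variable {m : ℕ}

lemma removeNth_update (i : Fin (m + 1)) {j : Fin (m + 1)} (l : Fin m)
    (hl : i.succAbove l = j) (γ : Vtx (m + 1)) (b : Bool) :
    Fin.removeNth i (Function.update γ j b) = Function.update (Fin.removeNth i γ) l b := by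
  funext l'
  show Function.update γ j b (i.succAbove l') = _
  by_cases h : l' = l
  · subst h
    rw [hl, Function.update_self, Function.update_self]
  · have hsj : i.succAbove l' ≠ j := by
      rw [← hl]
      exact fun hc => h (Fin.succAbove_right_injective hc)
    rw [Function.update_of_ne hsj, Function.update_of_ne h]
    rfl

/-- Key membership lemma: each flip of an "encompassed-after-projection" vertex
lies in `∪A`. -/
lemma flip_mem_supp {A : Finset (Sym2 (Vtx (m + 1)))} {i : Fin (m + 1)} {γ : Vtx (m + 1)}
    (hγ : Fin.removeNth i γ ∈ encSet (rhoSet i (γ i) (suppA A)))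
    {j : Fin (m + 1)} (hj : j ≠ i) :
    Function.update γ j (!γ j) ∈ suppA A := by
  obtain ⟨l, hl⟩ := Fin.exists_succAbove_eq hj
  have hrm : Fin.removeNth i (Function.update γ j (!γ j))
      = Function.update (Fin.removeNth i γ) l (!γ j) := removeNth_update i l hl γ _
  have hbj : (!γ j) = !(Fin.removeNth i γ) l := by
    show (!γ j) = !(γ (i.succAbove l)); rw [hl]
  have hadj : (cube m).Adj (Fin.removeNth i γ) (Fin.removeNth i (Function.update γ j (!γ j))) := by
    show hammingDist _ _ = 1
    rw [hrm, hammingDist_comm, hbj]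
    exact hamming_update _ _
  have hmem := hγ.1 _ hadj
  obtain ⟨α, hαA, hαi, hαeq⟩ := hmem
  have hui : Function.update γ j (!γ j) i = γ i := Function.update_of_ne (Ne.symm hj) _ _
  have hαflip : α = Function.update γ j (!γ j) := by
    calc α = i.insertNth (α i) (Fin.removeNth i α) := (Fin.insertNth_self_removeNth i α).symm
      _ = i.insertNth (Function.update γ j (!γ j) i)
            (Fin.removeNth i (Function.update γ j (!γ j))) := by rw [hαi, ← hαeq, hui]
      _ = Function.update γ j (!γ j) := Fin.insertNth_self_removeNth i _
  rwa [← hαflip]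

end MainAux

/-- Let `n = m + 1 > 4`, let `A` be a diminishable pair-set
in `Q_n`, let `i ∈ [n]`, and assume `i` is separating for `A` whenever
`|A| = n`. Then there are at most two vertices `γ` with
`ρ_{i=γ(i)}(γ) ∈ enc(ρ_{i=γ(i)}(∪A))`; and if `γ ≠ γ'` are two such vertices
then `|A| ≥ n - 1` and `χ(γ) ≠ χ(γ')`. -/
theorem stmt14 (m : ℕ) (hm : 4 ≤ m)
    (A : Finset (Sym2 (Vtx (m + 1)))) (i : Fin (m + 1))
    (hdim : Diminishable A)
    (hsep : A.card = m + 1 → Separating i A) :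
    {γ : Vtx (m + 1) |
        Fin.removeNth i γ ∈ encSet (rhoSet i (γ i) (suppA A))}.encard ≤ 2 ∧
    ∀ γ γ' : Vtx (m + 1),
      Fin.removeNth i γ ∈ encSet (rhoSet i (γ i) (suppA A)) →
      Fin.removeNth i γ' ∈ encSet (rhoSet i (γ' i) (suppA A)) →
      γ ≠ γ' → m ≤ A.card ∧ chi γ ≠ chi γ' := by
  classical
  obtain ⟨hPS, hOdd, hcase⟩ := hdim
  have hcard : A.card ≤ m + 1 := by
    rcases hcase with ⟨h1, _⟩ | ⟨h1, _⟩ <;> omega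
  set P := {γ : Vtx (m + 1) |
      Fin.removeNth i γ ∈ encSet (rhoSet i (γ i) (suppA A))} with hPdef
  -- the Finset of flips of γ in its slice
  set Nfin : Vtx (m + 1) → Finset (Vtx (m + 1)) :=
    fun γ => (Finset.univ.erase i).image (fun j => Function.update γ j (!γ j)) with hNdef
  have hNcard : ∀ γ : Vtx (m + 1), (Nfin γ).card = m := by
    intro γ
    rw [hNdef]
    have hinj : Set.InjOn (fun j => Function.update γ j (!γ j)) ↑(Finset.univ.erase i) := by
      intro j _ j' _ hjj'
      by_contra hne
      have h := congrFun hjj' j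
      simp only [Function.update_self, Function.update_of_ne hne] at h
      exact Bool.not_ne_self _ h
    rw [Finset.card_image_of_injOn hinj, Finset.card_erase_of_mem (Finset.mem_univ i),
      Finset.card_univ, Fintype.card_fin]
    omega
  -- vertices of fixed parity in the support
  set Sfin : ℤ → Finset (Vtx (m + 1)) :=
    fun ε => Finset.univ.filter (fun v => v ∈ suppA A ∧ chi v = ε) with hSdef
  set pick : Vtx (m + 1) → Sym2 (Vtx (m + 1)) :=
    fun v => if h : v ∈ suppA A then h.choose else s(v, v) with hpickdef
  have hpick : ∀ v, v ∈ suppA A → pick v ∈ A ∧ v ∈ pick v := by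
    intro v hv
    rw [hpickdef]
    simp only [dif_pos hv]
    exact hv.choose_spec
  have hScard : ∀ ε : ℤ, (Sfin ε).card ≤ A.card := by
    intro ε
    refine Finset.card_le_card_of_injOn pick ?_ ?_
    · intro v hv
      rw [hSdef] at hv
      simp only [Finset.mem_filter] at hv
      have hv' : v ∈ Finset.univ.filter (fun v => v ∈ suppA A ∧ chi v = ε) := hv
      exact (hpick v (Finset.mem_filter.mp hv').2.1).1
    · intro v hv v' hv' hvv'
      rw [hSdef] at hv hv'
      simp only [Finset.coe_filter, Set.mem_setOf_eq] at hv hv'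
      obtain ⟨hpA, hvp⟩ := hpick v hv.2.1
      obtain ⟨_, hvp'⟩ := hpick v' hv'.2.1
      rw [hvv'] at hvp
      obtain ⟨a, b, hab, hchab⟩ := hOdd _ hpA
      rw [← hvv', hab] at hvp hvp'
      rw [Sym2.mem_iff] at hvp hvp'
      have hch : chi v = chi v' := hv.2.2.trans hv'.2.2.symm
      rcases hvp with rfl | rfl <;> rcases hvp' with rfl | rfl
      · rfl
      · exact absurd hch hchab
      · exact absurd hch.symm hchab
      · rfl
  -- each Nfin γ for γ ∈ P lands in the opposite-parity part of the support
  have hNsub : ∀ γ ∈ P, Nfin γ ⊆ Sfin (-chi γ) := by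
    intro γ hγ v hv
    rw [hNdef] at hv
    obtain ⟨j, hj, rfl⟩ := Finset.mem_image.mp hv
    have hjne : j ≠ i := (Finset.mem_erase.mp hj).1
    rw [hSdef]
    simp only [Finset.mem_filter, Finset.mem_univ, true_and]
    exact ⟨flip_mem_supp hγ hjne, chi_update γ j⟩
  -- intersections of flip sets of distinct vertices have at most 2 elements
  have hinter : ∀ γ γ' : Vtx (m + 1), γ ≠ γ' → (Nfin γ ∩ Nfin γ').card ≤ 2 := by
    intro γ γ' hne
    rcases Finset.eq_empty_or_nonempty (Nfin γ ∩ Nfin γ') with hE | ⟨v0, hv0⟩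
    · simp [hE]
    obtain ⟨hv0γ, hv0γ'⟩ := Finset.mem_inter.mp hv0
    rw [hNdef] at hv0γ hv0γ'
    obtain ⟨j0, _, hv0e⟩ := Finset.mem_image.mp hv0γ
    obtain ⟨j0', _, hv0e'⟩ := Finset.mem_image.mp hv0γ'
    have heq0 : Function.update γ j0 (!γ j0) = Function.update γ' j0' (!γ' j0') :=
      hv0e.trans hv0e'.symm
    have hsub : Nfin γ ∩ Nfin γ' ⊆
        {Function.update γ j0 (!γ j0), Function.update γ j0' (!γ j0')} := by
      intro v hv
      obtain ⟨hvγ, hvγ'⟩ := Finset.mem_inter.mp hv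
      rw [hNdef] at hvγ hvγ'
      obtain ⟨j, _, hve⟩ := Finset.mem_image.mp hvγ
      obtain ⟨j', _, hve'⟩ := Finset.mem_image.mp hvγ'
      have heq : Function.update γ j (!γ j) = Function.update γ' j' (!γ' j') :=
        hve.trans hve'.symm
      have hjD : γ j ≠ γ' j := flip_coord_diff hne heq
      have hjmem : j = j0 ∨ j = j0' := by
        by_contra hc
        push_neg at hc
        exact hjD (flip_agree heq0 hc.1 hc.2)
      rw [← hve]
      rcases hjmem with rfl | rfl
      · exact Finset.mem_insert_self _ _
      · exact Finset.mem_insert_of_mem (Finset.mem_singleton_self _)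
    calc (Nfin γ ∩ Nfin γ').card ≤ _ := Finset.card_le_card hsub
      _ ≤ 2 := by
        refine le_trans (Finset.card_insert_le _ _) ?_
        simp
  -- distinct encompassed vertices have distinct parities
  have key : ∀ γ ∈ P, ∀ γ' ∈ P, γ ≠ γ' → chi γ ≠ chi γ' := by
    intro γ hγ γ' hγ' hne hch
    have h1 : Nfin γ ⊆ Sfin (-chi γ) := hNsub γ hγ
    have h2 : Nfin γ' ⊆ Sfin (-chi γ) := by rw [hch]; exact hNsub γ' hγ'
    have hu : Nfin γ ∪ Nfin γ' ⊆ Sfin (-chi γ) := Finset.union_subset h1 h2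
    have hcu : (Nfin γ ∪ Nfin γ').card ≤ m + 1 :=
      le_trans (Finset.card_le_card hu) (le_trans (hScard _) hcard)
    have hci := hinter γ γ' hne
    have hsum := Finset.card_union_add_card_inter (Nfin γ) (Nfin γ')
    rw [hNcard, hNcard] at hsum
    omega
  have hmle : ∀ γ ∈ P, m ≤ A.card := by
    intro γ hγ
    calc m = (Nfin γ).card := (hNcard γ).symm
      _ ≤ (Sfin (-chi γ)).card := Finset.card_le_card (hNsub γ hγ)
      _ ≤ A.card := hScard _
  constructor
  · have hinj : Set.InjOn chi P := by
      intro γ hγ γ' hγ' h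
      by_contra hne
      exact key γ hγ γ' hγ' hne h
    have himg : chi '' P ⊆ ({1, -1} : Set ℤ) := by
      rintro x ⟨γ, _, rfl⟩
      rcases chi_eq_one_or γ with h | h <;> simp [h]
    calc P.encard = (chi '' P).encard := hinj.encard_image.symm
      _ ≤ ({1, -1} : Set ℤ).encard := Set.encard_le_encard himg
      _ = 2 := Set.encard_pair (by norm_num)
  · intro γ γ' hγ hγ' hne
    exact ⟨hmle γ hγ, key γ hγ γ' hγ' hne⟩
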